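/- The chain rule for KL divergence: for joint distributions P and Q of a pair (X, Y) on a product of standard Borel spaces, KL(P_{X,Y} ‖ Q_{X,Y}) = KL(P_X ‖ Q_X) + E_{x ∼ P_X}[KL(P_{Y|X=x} ‖ Q_{Y|X=x})], where P_X, Q_X are the marginals of X and P_{Y|X}, Q_{Y|X} are regular conditional distributions. -/

import Mathlib

open MeasureTheory ProbabilityTheory Real
open scoped ENNReal ProbabilityTheory Classical

/-- Kullback-Leibler divergence, `+∞` if `P` is not absolutely continuous w.r.t. `Q`
or the log-likelihood ratio is not integrable. -/
noncomputable def klDiv {X : Type*} [MeasurableSpace X] (P Q : Measure X) : ℝ≥0∞ :=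
  if P ≪ Q ∧ Integrable (llr P Q) P then ENNReal.ofReal (∫ x, llr P Q x ∂P) else ⊤

section GibbsAux

variable {α : Type*} [MeasurableSpace α] {μ ν : Measure α}

lemma my_lintegral_exp_neg_llr_le [IsFiniteMeasure μ] [IsProbabilityMeasure ν] (hμν : μ ≪ ν) :
    ∫⁻ x, ENNReal.ofReal (Real.exp (- llr μ ν x)) ∂μ ≤ 1 := by
  have h1 : ∀ᵐ x ∂μ, ENNReal.ofReal (Real.exp (- llr μ ν x)) = (μ.rnDeriv ν x)⁻¹ := by
    filter_upwards [Measure.rnDeriv_pos hμν, hμν.ae_le (Measure.rnDeriv_lt_top μ ν)]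
      with x h0 htop
    have hpos : 0 < (μ.rnDeriv ν x).toReal := ENNReal.toReal_pos h0.ne' htop.ne
    rw [llr_def, Real.exp_neg, Real.exp_log hpos, ENNReal.ofReal_inv_of_pos hpos,
      ENNReal.ofReal_toReal htop.ne]
  rw [lintegral_congr_ae h1]
  calc ∫⁻ x, (μ.rnDeriv ν x)⁻¹ ∂μ = ∫⁻ x, μ.rnDeriv ν x * (μ.rnDeriv ν x)⁻¹ ∂ν :=
        (lintegral_rnDeriv_mul hμν
          (Measure.measurable_rnDeriv μ ν).inv.aemeasurable).symm
    _ ≤ ∫⁻ _, 1 ∂ν := lintegral_mono fun x => ENNReal.mul_inv_le_one _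
    _ = 1 := by simp

lemma my_integrable_exp_neg_llr [IsFiniteMeasure μ] [IsProbabilityMeasure ν] (hμν : μ ≪ ν) :
    Integrable (fun x => Real.exp (- llr μ ν x)) μ := by
  refine ⟨((measurable_llr μ ν).neg.exp).aestronglyMeasurable, ?_⟩
  rw [hasFiniteIntegral_iff_norm]
  refine lt_of_le_of_lt ?_ ENNReal.one_lt_top
  calc ∫⁻ x, ENNReal.ofReal ‖Real.exp (- llr μ ν x)‖ ∂μ
      = ∫⁻ x, ENNReal.ofReal (Real.exp (- llr μ ν x)) ∂μ := by
        simp_rw [Real.norm_of_nonneg (Real.exp_nonneg _)]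
    _ ≤ 1 := my_lintegral_exp_neg_llr_le hμν

lemma my_integral_exp_neg_llr_le [IsFiniteMeasure μ] [IsProbabilityMeasure ν] (hμν : μ ≪ ν) :
    ∫ x, Real.exp (- llr μ ν x) ∂μ ≤ 1 := by
  rw [integral_eq_lintegral_of_nonneg_ae (f := fun x => Real.exp (- llr μ ν x)) (ae_of_all _ fun x => (Real.exp_nonneg _))
    ((measurable_llr μ ν).neg.exp).aestronglyMeasurable]
  calc (∫⁻ x, ENNReal.ofReal (Real.exp (- llr μ ν x)) ∂μ).toReal
      ≤ (1 : ℝ≥0∞).toReal :=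
        ENNReal.toReal_mono (by simp) (my_lintegral_exp_neg_llr_le hμν)
    _ = 1 := by simp

lemma my_integral_llr_nonneg [IsProbabilityMeasure μ] [IsProbabilityMeasure ν] (hμν : μ ≪ ν)
    (hint : Integrable (llr μ ν) μ) : 0 ≤ ∫ x, llr μ ν x ∂μ := by
  have hexp := my_integrable_exp_neg_llr hμν
  have h := integral_mono hint.neg (hexp.sub (integrable_const 1))
    (fun x => by
      have := Real.add_one_le_exp (- llr μ ν x)
      simp only [Pi.neg_apply, Pi.sub_apply]
      linarith)
  simp only [Pi.neg_apply, Pi.sub_apply] at h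
  rw [integral_neg, integral_sub hexp (integrable_const 1)] at h
  simp only [integral_const, probReal_univ, ENNReal.toReal_one, smul_eq_mul, one_mul] at h
  linarith [my_integral_exp_neg_llr_le hμν]

lemma my_integral_abs_llr_le [IsProbabilityMeasure μ] [IsProbabilityMeasure ν] (hμν : μ ≪ ν)
    (hint : Integrable (llr μ ν) μ) :
    ∫ x, |llr μ ν x| ∂μ ≤ ∫ x, llr μ ν x ∂μ + 2 := by
  have hexp := my_integrable_exp_neg_llr hμν
  have h := integral_mono hint.abs (hint.add (hexp.const_mul 2))
    (fun x => by
      have h1 := Real.add_one_le_exp (- llr μ ν x)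
      have h2 := Real.exp_nonneg (- llr μ ν x)
      simp only [Pi.abs_apply, Pi.add_apply]
      rcases abs_cases (llr μ ν x) with ⟨he, _⟩ | ⟨he, _⟩ <;> rw [he] <;> nlinarith)
  simp only [Pi.add_apply] at h
  rw [integral_add hint (hexp.const_mul 2), integral_const_mul] at h
  linarith [my_integral_exp_neg_llr_le hμν]

end GibbsAux

section CompProdAux

open ProbabilityTheory

variable {α β : Type*} [MeasurableSpace α] [MeasurableSpace β]
  [MeasurableSpace.CountablyGenerated β]
  {μ ν : Measure α} {κ η : Kernel α β}

lemma my_slice_eq (x : α) :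
    Prod.mk x ⁻¹' Kernel.mutuallySingularSet κ η = Kernel.mutuallySingularSetSlice κ η x := rfl

lemma my_ae_ac_of_ac [IsFiniteMeasure μ] [SFinite ν] [IsFiniteKernel κ] [IsFiniteKernel η]
    (h : μ ⊗ₘ κ ≪ ν ⊗ₘ η) : ∀ᵐ x ∂μ, κ x ≪ η x := by
  have hS := Kernel.measurableSet_mutuallySingularSet κ η
  have hQ : (ν ⊗ₘ η) (Kernel.mutuallySingularSet κ η) = 0 := by
    rw [Measure.compProd_apply hS]
    have : ∀ x, η x (Prod.mk x ⁻¹' Kernel.mutuallySingularSet κ η) = 0 := fun x => by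
      rw [my_slice_eq]; exact Kernel.measure_mutuallySingularSetSlice κ η x
    simp [this]
  have hP := h hQ
  rw [Measure.compProd_apply hS,
    lintegral_eq_zero_iff (Kernel.measurable_kernel_prodMk_left hS)] at hP
  filter_upwards [hP] with x hx
  rw [← Kernel.singularPart_eq_zero_iff_absolutelyContinuous,
    Kernel.singularPart_eq_zero_iff_measure_eq_zero]
  rw [← my_slice_eq]
  exact hx

lemma my_withDensity_compProd [IsFiniteMeasure μ] [IsFiniteMeasure ν]
    [IsFiniteKernel κ] [IsFiniteKernel η]
    (hμν : μ ≪ ν) (hκη : ∀ᵐ x ∂μ, κ x ≪ η x) :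
    (ν ⊗ₘ η).withDensity
      (fun p => μ.rnDeriv ν p.1 * Kernel.rnDeriv κ η p.1 p.2) = μ ⊗ₘ κ := by
  have hKmeas : Measurable (fun p : α × β => Kernel.rnDeriv κ η p.1 p.2) := by
    have := Kernel.measurable_rnDeriv κ η
    exact this.comp (measurable_fst.prodMk measurable_snd)
  have hg : Measurable fun p : α × β => μ.rnDeriv ν p.1 * Kernel.rnDeriv κ η p.1 p.2 :=
    ((Measure.measurable_rnDeriv μ ν).comp measurable_fst).mul hKmeas
  ext s hs
  rw [withDensity_apply _ hs, ← lintegral_indicator hs _,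
    Measure.lintegral_compProd (hg.indicator hs), Measure.compProd_apply hs]
  have hK' : Measurable (s.indicator (fun p : α × β => Kernel.rnDeriv κ η p.1 p.2)) :=
    hKmeas.indicator hs
  have h1 : ∀ x, ∫⁻ y, s.indicator
        (fun p => μ.rnDeriv ν p.1 * Kernel.rnDeriv κ η p.1 p.2) (x, y) ∂η x
      = μ.rnDeriv ν x
        * ∫⁻ y, s.indicator (fun p : α × β => Kernel.rnDeriv κ η p.1 p.2) (x, y) ∂η x := by
    intro x
    have hpt : ∀ y, s.indicator
          (fun p => μ.rnDeriv ν p.1 * Kernel.rnDeriv κ η p.1 p.2) (x, y)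
        = μ.rnDeriv ν x * s.indicator (fun p : α × β => Kernel.rnDeriv κ η p.1 p.2) (x, y) := by
      intro y; by_cases hxy : (x, y) ∈ s <;> simp [Set.indicator_apply, hxy]
    simp_rw [hpt]
    exact lintegral_const_mul _ (hK'.comp measurable_prodMk_left)
  simp_rw [h1]
  have hF : Measurable fun x =>
      ∫⁻ y, s.indicator (fun p : α × β => Kernel.rnDeriv κ η p.1 p.2) (x, y) ∂η x :=
    hK'.lintegral_kernel_prod_right'
  rw [lintegral_rnDeriv_mul hμν hF.aemeasurable]
  refine lintegral_congr_ae ?_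
  filter_upwards [hκη] with x hx
  calc ∫⁻ y, s.indicator (fun p : α × β => Kernel.rnDeriv κ η p.1 p.2) (x, y) ∂η x
      = ∫⁻ y, (Prod.mk x ⁻¹' s).indicator (fun y => Kernel.rnDeriv κ η x y) y ∂η x :=
        lintegral_congr fun y => by
          by_cases hxy : (x, y) ∈ s <;> simp [Set.indicator_apply, hxy, Set.mem_preimage]
    _ = ∫⁻ y in Prod.mk x ⁻¹' s, Kernel.rnDeriv κ η x y ∂η x :=
        lintegral_indicator (measurable_prodMk_left hs) _
    _ = ∫⁻ y in Prod.mk x ⁻¹' s, (κ x).rnDeriv (η x) y ∂η x :=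
        lintegral_congr_ae (ae_restrict_of_ae (Kernel.rnDeriv_eq_rnDeriv_measure))
    _ = κ x (Prod.mk x ⁻¹' s) := Measure.setLIntegral_rnDeriv hx _

lemma my_rnDeriv_compProd [IsFiniteMeasure μ] [IsFiniteMeasure ν]
    [IsFiniteKernel κ] [IsFiniteKernel η]
    (hμν : μ ≪ ν) (hκη : ∀ᵐ x ∂μ, κ x ≪ η x) :
    (μ ⊗ₘ κ).rnDeriv (ν ⊗ₘ η)
      =ᵐ[ν ⊗ₘ η] fun p => μ.rnDeriv ν p.1 * Kernel.rnDeriv κ η p.1 p.2 := by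
  have hKmeas : Measurable (fun p : α × β => Kernel.rnDeriv κ η p.1 p.2) :=
    (Kernel.measurable_rnDeriv κ η).comp (measurable_fst.prodMk measurable_snd)
  have hg : Measurable fun p : α × β => μ.rnDeriv ν p.1 * Kernel.rnDeriv κ η p.1 p.2 :=
    ((Measure.measurable_rnDeriv μ ν).comp measurable_fst).mul hKmeas
  have := Measure.rnDeriv_withDensity (ν ⊗ₘ η) hg
  rwa [my_withDensity_compProd hμν hκη] at this

end CompProdAux

section Main

variable {α β : Type*} [MeasurableSpace α] [MeasurableSpace β]
  [MeasurableSpace.CountablyGenerated β]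
  {μ ν : Measure α} {κ η : Kernel α β}

lemma my_ae_fst {p : α → Prop} [SFinite μ] [IsMarkovKernel κ] (h : ∀ᵐ x ∂μ, p x) :
    ∀ᵐ q ∂(μ ⊗ₘ κ), p q.1 := by
  have h1 : (μ ⊗ₘ κ).map Prod.fst = μ := Measure.fst_compProd μ κ
  exact ae_of_ae_map measurable_fst.aemeasurable (h1.symm ▸ h)

lemma my_llr_fiber [IsFiniteKernel κ] [IsFiniteKernel η] (hκη : ∀ᵐ x ∂μ, κ x ≪ η x) :
    ∀ᵐ x ∂μ, llr (κ x) (η x)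
      =ᵐ[κ x] fun y => log (Kernel.rnDeriv κ η x y).toReal := by
  filter_upwards [hκη] with x hx
  filter_upwards [hx.ae_le (Kernel.rnDeriv_eq_rnDeriv_measure (κ := κ) (η := η) (a := x))]
    with y hy
  rw [hy]
  simp [llr_def]

lemma my_llr_compProd [IsProbabilityMeasure μ] [IsProbabilityMeasure ν]
    [IsMarkovKernel κ] [IsMarkovKernel η]
    (hμν : μ ≪ ν) (hκη : ∀ᵐ x ∂μ, κ x ≪ η x) :
    llr (μ ⊗ₘ κ) (ν ⊗ₘ η)
      =ᵐ[μ ⊗ₘ κ] fun p => llr μ ν p.1 + log (Kernel.rnDeriv κ η p.1 p.2).toReal := by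
  have hAC : μ ⊗ₘ κ ≪ ν ⊗ₘ η := Measure.AbsolutelyContinuous.compProd hμν hκη
  have h1 := hAC.ae_le (my_rnDeriv_compProd hμν hκη)
  have h2 : ∀ᵐ p ∂(μ ⊗ₘ κ), 0 < μ.rnDeriv ν p.1 ∧ μ.rnDeriv ν p.1 < ⊤ :=
    my_ae_fst ((Measure.rnDeriv_pos hμν).and (hμν.ae_le (Measure.rnDeriv_lt_top μ ν)))
  have hfm : Measurable (fun p : α × β => Kernel.rnDeriv κ η p.1 p.2) :=
    (Kernel.measurable_rnDeriv κ η).comp (measurable_fst.prodMk measurable_snd)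
  have h3 : ∀ᵐ p ∂(μ ⊗ₘ κ),
      0 < Kernel.rnDeriv κ η p.1 p.2 ∧ Kernel.rnDeriv κ η p.1 p.2 < ⊤ := by
    refine Measure.ae_compProd_of_ae_ae
      (hfm (measurableSet_Ioo : MeasurableSet (Set.Ioo (0 : ℝ≥0∞) ⊤))) ?_
    filter_upwards [hκη] with x hx
    have hrn := Kernel.rnDeriv_eq_rnDeriv_measure (κ := κ) (η := η) (a := x)
    filter_upwards [hx.ae_le hrn, Measure.rnDeriv_pos hx,
      hx.ae_le (Measure.rnDeriv_lt_top (κ x) (η x))] with y hy hy0 hyt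
    rw [hy]
    exact ⟨hy0, hyt⟩
  filter_upwards [h1, h2, h3] with p hp h2p h3p
  simp only [llr_def]
  rw [hp, ENNReal.toReal_mul,
    Real.log_mul (ENNReal.toReal_pos h2p.1.ne' h2p.2.ne).ne'
      (ENNReal.toReal_pos h3p.1.ne' h3p.2.ne).ne']

theorem my_klDiv_compProd (μ ν : Measure α) [IsProbabilityMeasure μ] [IsProbabilityMeasure ν]
    (κ η : Kernel α β) [IsMarkovKernel κ] [IsMarkovKernel η] :
    klDiv (μ ⊗ₘ κ) (ν ⊗ₘ η) = klDiv μ ν + ∫⁻ x, klDiv (κ x) (η x) ∂μ := by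
  by_cases hμν : μ ≪ ν
  swap
  · have hPQ : ¬ μ ⊗ₘ κ ≪ ν ⊗ₘ η := by
      intro h
      have hmap : (μ ⊗ₘ κ).map Prod.fst ≪ (ν ⊗ₘ η).map Prod.fst := h.map measurable_fst
      have h1 : (μ ⊗ₘ κ).map Prod.fst = μ := Measure.fst_compProd μ κ
      have h2 : (ν ⊗ₘ η).map Prod.fst = ν := Measure.fst_compProd ν η
      rw [h1, h2] at hmap
      exact hμν hmap
    rw [klDiv, if_neg (fun h => hPQ h.1), klDiv, if_neg (fun h => hμν h.1), top_add]
  by_cases hκη : ∀ᵐ x ∂μ, κ x ≪ η x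
  swap
  · have hPQ : ¬ μ ⊗ₘ κ ≪ ν ⊗ₘ η := fun h => hκη (my_ae_ac_of_ac h)
    rw [klDiv, if_neg (fun h => hPQ h.1)]
    have hmeas : MeasurableSet {x | κ x ≪ η x} :=
      Kernel.measurableSet_absolutelyContinuous κ η
    rw [ae_iff] at hκη
    have htop : ∫⁻ x, klDiv (κ x) (η x) ∂μ = ⊤ := by
      rw [eq_top_iff]
      calc (⊤ : ℝ≥0∞) = ⊤ * μ {x | ¬ κ x ≪ η x} := by rw [ENNReal.top_mul hκη]
        _ = ∫⁻ x, ({x | ¬ κ x ≪ η x}).indicator (fun _ => ⊤) x ∂μ := by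
            have hmeasc : MeasurableSet {x | ¬ κ x ≪ η x} := hmeas.compl
            rw [lintegral_indicator hmeasc _, setLIntegral_const, mul_comm]
        _ ≤ ∫⁻ x, klDiv (κ x) (η x) ∂μ := by
            refine lintegral_mono fun x => ?_
            by_cases hx : κ x ≪ η x
            · simp [Set.indicator_apply, hx]
            · have hk : klDiv (κ x) (η x) = ⊤ := by rw [klDiv, if_neg (fun h => hx h.1)]
              simp [hk]
    rw [htop, add_top]
  -- main case: both absolute continuity conditions hold
  have hPQ_AC : μ ⊗ₘ κ ≪ ν ⊗ₘ η := Measure.AbsolutelyContinuous.compProd hμν hκη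
  set c : α → ℝ := llr μ ν with hc_def
  set L : α → β → ℝ := fun x y => log (Kernel.rnDeriv κ η x y).toReal with hL_def
  have hL : Measurable (Function.uncurry L) :=
    Real.measurable_log.comp ((Kernel.measurable_rnDeriv κ η).ennreal_toReal)
  have hfiber : ∀ᵐ x ∂μ, llr (κ x) (η x) =ᵐ[κ x] L x := my_llr_fiber hκη
  have hllr : llr (μ ⊗ₘ κ) (ν ⊗ₘ η) =ᵐ[μ ⊗ₘ κ] fun p => c p.1 + L p.1 p.2 :=
    my_llr_compProd hμν hκη
  have hsum_meas : Measurable fun p : α × β => c p.1 + L p.1 p.2 :=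
    ((measurable_llr μ ν).comp measurable_fst).add hL
  set G : α → ℝ≥0∞ := fun x =>
    if Integrable (L x) (κ x) then ENNReal.ofReal (∫ y, L x y ∂κ x) else ⊤ with hG_def
  have hG_meas : Measurable G :=
    Measurable.ite (measurableSet_kernel_integrable hL.stronglyMeasurable)
      ((hL.stronglyMeasurable.integral_kernel_prod_right).measurable.ennreal_ofReal)
      measurable_const
  have hGfib : ∀ᵐ x ∂μ, klDiv (κ x) (η x) = G x := by
    filter_upwards [hκη, hfiber] with x hx hxf
    by_cases hi : Integrable (L x) (κ x)
    · rw [klDiv, if_pos ⟨hx, (integrable_congr hxf).mpr hi⟩]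
      simp only [hG_def]
      rw [if_pos hi, integral_congr_ae hxf]
    · rw [klDiv, if_neg (fun h => hi ((integrable_congr hxf).mp h.2))]
      simp only [hG_def]
      rw [if_neg hi]
  have hGlint : ∫⁻ x, klDiv (κ x) (η x) ∂μ = ∫⁻ x, G x ∂μ := lintegral_congr_ae hGfib
  have hFnn : ∀ᵐ x ∂μ, Integrable (L x) (κ x) → 0 ≤ ∫ y, L x y ∂κ x := by
    filter_upwards [hκη, hfiber] with x hx hxf hi
    rw [← integral_congr_ae hxf]
    exact my_integral_llr_nonneg hx ((integrable_congr hxf).mpr hi)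
  have habs : ∀ᵐ x ∂μ, Integrable (L x) (κ x) →
      ∫ y, |L x y| ∂κ x ≤ (∫ y, L x y ∂κ x) + 2 := by
    filter_upwards [hκη, hfiber] with x hx hxf hi
    have hxf' : (fun y => |llr (κ x) (η x) y|) =ᵐ[κ x] fun y => |L x y| :=
      hxf.mono fun y hy => by simp [hy]
    rw [← integral_congr_ae hxf', ← integral_congr_ae hxf]
    exact my_integral_abs_llr_le hx ((integrable_congr hxf).mpr hi)
  have hexp := my_integrable_exp_neg_llr hμν
  by_cases hint : Integrable (llr (μ ⊗ₘ κ) (ν ⊗ₘ η)) (μ ⊗ₘ κ)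
  · -- finite case
    have hint2 : Integrable (fun p : α × β => c p.1 + L p.1 p.2) (μ ⊗ₘ κ) :=
      (integrable_congr hllr).mp hint
    obtain ⟨hfib, hnorm⟩ :=
      (Measure.integrable_compProd_iff hsum_meas.aestronglyMeasurable).mp hint2
    have hLfib : ∀ᵐ x ∂μ, Integrable (L x) (κ x) := by
      filter_upwards [hfib] with x hx
      have h := hx.sub (integrable_const (c x))
      exact h.congr (ae_of_all _ fun y => by simp [Pi.sub_apply])
    have hsum_int : ∀ᵐ x ∂μ, Integrable (L x) (κ x) →
        ∫ y, (c x + L x y) ∂κ x = c x + ∫ y, L x y ∂κ x := by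
      refine ae_of_all _ fun x hi => ?_
      rw [integral_add (integrable_const _) hi]
      simp
    have hcint : Integrable c μ := by
      refine Integrable.mono' (hnorm.add hexp)
        (measurable_llr μ ν).aestronglyMeasurable ?_
      filter_upwards [hFnn, hLfib, hsum_int] with x h0 hxi hsx
      have h6 : c x ≤ ∫ y, ‖c x + L x y‖ ∂κ x := by
        calc c x ≤ c x + ∫ y, L x y ∂κ x := le_add_of_nonneg_right (h0 hxi)
          _ = ∫ y, (c x + L x y) ∂κ x := (hsx hxi).symm
          _ ≤ |∫ y, (c x + L x y) ∂κ x| := le_abs_self _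
          _ ≤ ∫ y, ‖c x + L x y‖ ∂κ x := by
              rw [← Real.norm_eq_abs]
              exact norm_integral_le_integral_norm _
      have h7 : - c x ≤ Real.exp (- c x) := by linarith [Real.add_one_le_exp (- c x)]
      have h8 : 0 ≤ ∫ y, ‖c x + L x y‖ ∂κ x := integral_nonneg fun y => norm_nonneg _
      have h9 := Real.exp_nonneg (- c x)
      rw [Real.norm_eq_abs]
      rcases abs_cases (c x) with ⟨he, _⟩ | ⟨he, _⟩ <;> rw [he] <;>
        simp only [Pi.add_apply] <;> linarith
    have hFintermediate : Integrable (fun x => ∫ y, (c x + L x y) ∂κ x) μ := by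
      refine Integrable.mono' hnorm
        (hsum_meas.stronglyMeasurable.integral_kernel_prod_right').aestronglyMeasurable ?_
      exact ae_of_all _ fun x => norm_integral_le_integral_norm _
    have hFint : Integrable (fun x => ∫ y, L x y ∂κ x) μ := by
      refine (hFintermediate.sub hcint).congr ?_
      filter_upwards [hLfib, hsum_int] with x hxi hsx
      simp only [Pi.sub_apply]
      rw [hsx hxi]
      ring
    have hFnn' : 0 ≤ᵐ[μ] fun x => ∫ y, L x y ∂κ x := by
      filter_upwards [hFnn, hLfib] with x h1 h2 using h1 h2
    rw [klDiv, if_pos ⟨hPQ_AC, hint⟩, klDiv, if_pos ⟨hμν, hcint⟩, hGlint]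
    have hval : ∫ p, llr (μ ⊗ₘ κ) (ν ⊗ₘ η) p ∂(μ ⊗ₘ κ)
        = ∫ x, c x ∂μ + ∫ x, (∫ y, L x y ∂κ x) ∂μ := by
      rw [integral_congr_ae hllr, Measure.integral_compProd hint2]
      rw [← integral_add hcint hFint]
      refine integral_congr_ae ?_
      filter_upwards [hLfib, hsum_int] with x hxi hsx
      rw [hsx hxi]
    have hGval : ∫⁻ x, G x ∂μ = ENNReal.ofReal (∫ x, (∫ y, L x y ∂κ x) ∂μ) := by
      rw [ofReal_integral_eq_lintegral_ofReal hFint hFnn']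
      refine lintegral_congr_ae ?_
      filter_upwards [hLfib] with x hxi
      simp only [hG_def]
      rw [if_pos hxi]
    rw [hval, hGval, ENNReal.ofReal_add (my_integral_llr_nonneg hμν hcint)
      (integral_nonneg_of_ae hFnn')]
  · -- infinite case
    rw [klDiv, if_neg (fun h => hint h.2), hGlint]
    by_cases hcint : Integrable c μ
    swap
    · rw [klDiv, if_neg (fun h => hcint h.2), top_add]
    by_cases hGtop : ∫⁻ x, G x ∂μ = ⊤
    · rw [hGtop, add_top]
    exfalso
    have hGae : ∀ᵐ x ∂μ, G x < ⊤ := ae_lt_top hG_meas hGtop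
    have hLfib : ∀ᵐ x ∂μ, Integrable (L x) (κ x) := by
      filter_upwards [hGae] with x hx
      by_contra hi
      simp only [hG_def, if_neg hi] at hx
      exact absurd hx (lt_irrefl ⊤)
    have hFint : Integrable (fun x => ∫ y, L x y ∂κ x) μ := by
      refine ⟨(hL.stronglyMeasurable.integral_kernel_prod_right).aestronglyMeasurable, ?_⟩
      rw [hasFiniteIntegral_iff_norm]
      have heq : ∀ᵐ x ∂μ, ENNReal.ofReal ‖∫ y, L x y ∂κ x‖ = G x := by
        filter_upwards [hFnn, hLfib] with x h1 h2
        rw [Real.norm_of_nonneg (h1 h2)]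
        simp only [hG_def]
        rw [if_pos h2]
      rw [lintegral_congr_ae heq]
      exact lt_top_iff_ne_top.mpr hGtop
    have hint2 : Integrable (fun p : α × β => c p.1 + L p.1 p.2) (μ ⊗ₘ κ) := by
      rw [Measure.integrable_compProd_iff hsum_meas.aestronglyMeasurable]
      constructor
      · filter_upwards [hLfib] with x hx using (integrable_const _).add hx
      · refine Integrable.mono' ((hcint.abs.add hFint).add (integrable_const 2))
          ((hsum_meas.norm.stronglyMeasurable.integral_kernel_prod_right').aestronglyMeasurable)
          ?_
        filter_upwards [hLfib, habs] with x hxi hxa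
        have h9 : ∫ y, ‖c x + L x y‖ ∂κ x ≤ |c x| + ∫ y, |L x y| ∂κ x := by
          have hmono := integral_mono (((integrable_const (c x)).add hxi).norm)
            ((integrable_const |c x|).add hxi.abs)
            (fun y => by
              simp only [Pi.add_apply]
              rw [Real.norm_eq_abs]
              exact abs_add_le _ _)
          simp only [Pi.add_apply] at hmono
          rw [integral_add (integrable_const _) hxi.abs] at hmono
          simpa using hmono
        have h10 : 0 ≤ ∫ y, ‖c x + L x y‖ ∂κ x := integral_nonneg fun y => norm_nonneg _
        rw [Real.norm_of_nonneg h10]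
        have := hxa hxi
        simp only [Pi.add_apply]
        linarith
    exact hint ((integrable_congr hllr).mpr hint2)

end Main

/-- Chain rule for KL divergence: the KL divergence of the joint laws equals the KL
divergence of the first marginals plus the expected KL divergence of the
disintegrations (regular conditional distributions). -/
theorem klDiv_chain_rule {X Y : Type*} [MeasurableSpace X] [StandardBorelSpace X]
    [MeasurableSpace Y] [StandardBorelSpace Y] [Nonempty Y]
    (P Q : Measure (X × Y)) [IsProbabilityMeasure P] [IsProbabilityMeasure Q] :
    klDiv P Q = klDiv P.fst Q.fst + ∫⁻ x, klDiv (P.condKernel x) (Q.condKernel x) ∂P.fst := by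
  conv_lhs => rw [← P.disintegrate P.condKernel, ← Q.disintegrate Q.condKernel]
  exact my_klDiv_compProd P.fst Q.fst P.condKernel Q.condKernel
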